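/- For the Tsallis divergence T(f,g) = 1/(1−α) + (1/(α−1)) ∫ f^α g^{1−α} with densities bounded in [B', B], the influence functions satisfy the regularity condition: E_f[(ψ_f(X; f', g') − ψ_f(X; f, g))²] = O(‖f−f'‖₂² + ‖g−g'‖₂²) as ‖f−f'‖₂, ‖g−g'‖₂ → 0, uniformly over densities f, f', g, g' bounded in [B', B]. -/

import Mathlib

open MeasureTheory Set

section Aux

variable {X : Type*} [MeasurableSpace X] {μ : Measure X} [IsFiniteMeasure μ]

/-- Bounded measurable functions are integrable on a finite measure. -/
lemma aux_integrable_of_bdd {h : X → ℝ} (hm : Measurable h) {M : ℝ}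
    (hb : ∀ x, |h x| ≤ M) : Integrable h μ :=
  (integrable_const M).mono' hm.aestronglyMeasurable
    (ae_of_all _ (by simpa [Real.norm_eq_abs] using hb))

/-- Cauchy–Schwarz / variance inequality: `(∫ h)² ≤ μ(univ) ∫ h²`. -/
lemma aux_sq_integral_le {h : X → ℝ} (h1 : Integrable h μ)
    (h2 : Integrable (fun x => (h x) ^ 2) μ) :
    (∫ x, h x ∂μ) ^ 2 ≤ (μ univ).toReal * ∫ x, (h x) ^ 2 ∂μ := by
  set V := (μ univ).toReal with hV
  set m := ∫ x, h x ∂μ with hm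
  have hV0 : 0 ≤ V := ENNReal.toReal_nonneg
  rcases eq_or_lt_of_le hV0 with hVz | hVpos
  · have hμ : μ = 0 := by
      rcases (ENNReal.toReal_eq_zero_iff (μ univ)).mp hVz.symm with h | h
      · exact Measure.measure_univ_eq_zero.mp h
      · exact absurd h (measure_ne_top μ _)
    simp [hm, hμ]
  · have key : 0 ≤ ∫ x, (V * h x - m) ^ 2 ∂μ := integral_nonneg fun x => sq_nonneg _
    have i1 : Integrable (fun x => V ^ 2 * (h x) ^ 2) μ := h2.const_mul _
    have i2 : Integrable (fun x => (2 * V * m) * h x) μ := h1.const_mul _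
    have i12 : Integrable (fun x => V ^ 2 * (h x) ^ 2 - (2 * V * m) * h x) μ := i1.sub i2
    have hfun : (fun x => (V * h x - m) ^ 2)
        = fun x => (V ^ 2 * (h x) ^ 2 - (2 * V * m) * h x) + m ^ 2 := by
      funext x; ring
    have e1 : ∫ x, ((V ^ 2 * (h x) ^ 2 - (2 * V * m) * h x) + m ^ 2) ∂μ
        = (∫ x, (V ^ 2 * (h x) ^ 2 - (2 * V * m) * h x) ∂μ) + (∫ _x, (m ^ 2 : ℝ) ∂μ) :=
      integral_add i12 (integrable_const _)
    have e2 : ∫ x, (V ^ 2 * (h x) ^ 2 - (2 * V * m) * h x) ∂μ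
        = (∫ x, V ^ 2 * (h x) ^ 2 ∂μ) - ∫ x, (2 * V * m) * h x ∂μ := integral_sub i1 i2
    have e3 : ∫ x, V ^ 2 * (h x) ^ 2 ∂μ = V ^ 2 * ∫ x, (h x) ^ 2 ∂μ := integral_const_mul _ _
    have e4 : ∫ x, (2 * V * m) * h x ∂μ = (2 * V * m) * m := by
      rw [integral_const_mul]
    have e5 : ∫ _x, (m ^ 2 : ℝ) ∂μ = m ^ 2 * V := by
      rw [integral_const, smul_eq_mul, mul_comm]
      rfl
    have expand : ∫ x, (V * h x - m) ^ 2 ∂μ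
        = V ^ 2 * (∫ x, (h x) ^ 2 ∂μ) - 2 * V * m * m + m ^ 2 * V := by
      rw [hfun, e1, e2, e3, e4, e5]
    nlinarith [key, expand, hVpos]

/-- On `[B', B]` with `0 < B'`, `t ^ q` is bounded by `B' ^ q + B ^ q`. -/
lemma aux_rpow_bound {B B' : ℝ} (hB' : 0 < B') (hBB : B' ≤ B) (q : ℝ) {t : ℝ}
    (ht : t ∈ Icc B' B) : t ^ q ≤ B' ^ q + B ^ q := by
  have ht0 : (0:ℝ) < t := lt_of_lt_of_le hB' ht.1
  have hB0 : (0:ℝ) < B := lt_of_lt_of_le hB' hBB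
  rcases le_or_gt 0 q with hq | hq
  · have h1 : t ^ q ≤ B ^ q := Real.rpow_le_rpow ht0.le ht.2 hq
    have h2 : 0 < B' ^ q := Real.rpow_pos_of_pos hB' q
    linarith
  · have h1 : t ^ q ≤ B' ^ q := Real.rpow_le_rpow_of_nonpos hB' ht.1 hq.le
    have h2 : 0 < B ^ q := Real.rpow_pos_of_pos hB0 q
    linarith

set_option maxHeartbeats 1000000 in
/-- Lipschitz bound for `t ↦ t ^ p` on `[B', B]`. -/
lemma aux_rpow_lip {B B' : ℝ} (hB' : 0 < B') (hBB : B' ≤ B) (p : ℝ) {a b : ℝ}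
    (ha : a ∈ Icc B' B) (hb : b ∈ Icc B' B) :
    |a ^ p - b ^ p| ≤ (|p| * (B' ^ (p - 1) + B ^ (p - 1))) * |a - b| := by
  have h := (convex_Icc B' B).norm_image_sub_le_of_norm_hasDerivWithin_le
    (f := fun t => t ^ p) (f' := fun t => p * t ^ (p - 1))
    (fun t ht => (Real.hasDerivAt_rpow_const
      (Or.inl (ne_of_gt (lt_of_lt_of_le hB' ht.1)))).hasDerivWithinAt)
    (C := |p| * (B' ^ (p - 1) + B ^ (p - 1)))
    (fun t ht => by
      have ht0 : (0:ℝ) < t := lt_of_lt_of_le hB' ht.1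
      rw [Real.norm_eq_abs, abs_mul, abs_of_pos (Real.rpow_pos_of_pos ht0 _)]
      exact mul_le_mul_of_nonneg_left (aux_rpow_bound hB' hBB (p - 1) ht) (abs_nonneg p))
    hb ha
  simpa [Real.norm_eq_abs] using h

/-- Uniform bound on products of powers of functions valued in `[B', B]`. -/
lemma aux_prod_bdd {B B' : ℝ} (hB' : 0 < B') (hBB : B' ≤ B) (u v : ℝ) :
    ∃ Mb : ℝ, 0 ≤ Mb ∧ ∀ a b : ℝ, a ∈ Icc B' B → b ∈ Icc B' B →
      |a ^ u * b ^ v| ≤ Mb := by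
  refine ⟨(B' ^ u + B ^ u) * (B' ^ v + B ^ v), ?_, ?_⟩
  · have h1 : 0 < B' ^ u := Real.rpow_pos_of_pos hB' _
    have h2 : 0 < B ^ u := Real.rpow_pos_of_pos (lt_of_lt_of_le hB' hBB) _
    have h3 : 0 < B' ^ v := Real.rpow_pos_of_pos hB' _
    have h4 : 0 < B ^ v := Real.rpow_pos_of_pos (lt_of_lt_of_le hB' hBB) _
    positivity
  · intro a b ha hb
    have ha0 : 0 < a ^ u := Real.rpow_pos_of_pos (lt_of_lt_of_le hB' ha.1) _
    have hb0 : 0 < b ^ v := Real.rpow_pos_of_pos (lt_of_lt_of_le hB' hb.1) _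
    rw [abs_mul, abs_of_pos ha0, abs_of_pos hb0]
    have h1 := aux_rpow_bound hB' hBB u ha
    have h2 := aux_rpow_bound hB' hBB v hb
    exact mul_le_mul h1 h2 hb0.le (le_trans ha0.le h1)

/-- Squared Lipschitz bound for `(a, b) ↦ a ^ u * b ^ v` on `[B', B]²`. -/
lemma aux_prod_lip {B B' : ℝ} (hB' : 0 < B') (hBB : B' ≤ B) (u v : ℝ) :
    ∃ K : ℝ, 0 ≤ K ∧ ∀ a a' b b' : ℝ, a ∈ Icc B' B → a' ∈ Icc B' B →
      b ∈ Icc B' B → b' ∈ Icc B' B →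
      (a' ^ u * b' ^ v - a ^ u * b ^ v) ^ 2 ≤ K * ((a - a') ^ 2 + (b - b') ^ 2) := by
  have hB0 : (0:ℝ) < B := lt_of_lt_of_le hB' hBB
  set Lu : ℝ := |u| * (B' ^ (u - 1) + B ^ (u - 1)) with hLu
  set Lv : ℝ := |v| * (B' ^ (v - 1) + B ^ (v - 1)) with hLv
  set Mu : ℝ := B' ^ u + B ^ u with hMu
  set Mv : ℝ := B' ^ v + B ^ v with hMv
  have hLu0 : 0 ≤ Lu := by
    have h1 : 0 < B' ^ (u - 1) := Real.rpow_pos_of_pos hB' _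
    have h2 : 0 < B ^ (u - 1) := Real.rpow_pos_of_pos hB0 _
    have h3 := abs_nonneg u
    rw [hLu]; positivity
  have hLv0 : 0 ≤ Lv := by
    have h1 : 0 < B' ^ (v - 1) := Real.rpow_pos_of_pos hB' _
    have h2 : 0 < B ^ (v - 1) := Real.rpow_pos_of_pos hB0 _
    have h3 := abs_nonneg v
    rw [hLv]; positivity
  have hMu0 : 0 ≤ Mu := by
    have h1 : 0 < B' ^ u := Real.rpow_pos_of_pos hB' _
    have h2 : 0 < B ^ u := Real.rpow_pos_of_pos hB0 _
    rw [hMu]; positivity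
  have hMv0 : 0 ≤ Mv := by
    have h1 : 0 < B' ^ v := Real.rpow_pos_of_pos hB' _
    have h2 : 0 < B ^ v := Real.rpow_pos_of_pos hB0 _
    rw [hMv]; positivity
  set K0 : ℝ := Lu * Mv + Mu * Lv with hK0
  refine ⟨2 * K0 ^ 2, by positivity, ?_⟩
  intro a a' b b' ha ha' hb hb'
  have h1 : |a' ^ u - a ^ u| ≤ Lu * |a - a'| := by
    have := aux_rpow_lip hB' hBB u ha' ha
    rwa [abs_sub_comm a' a] at this
  have h2 : |b' ^ v - b ^ v| ≤ Lv * |b - b'| := by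
    have := aux_rpow_lip hB' hBB v hb' hb
    rwa [abs_sub_comm b' b] at this
  have h3 : |b' ^ v| ≤ Mv := by
    rw [abs_of_pos (Real.rpow_pos_of_pos (lt_of_lt_of_le hB' hb'.1) _)]
    exact aux_rpow_bound hB' hBB v hb'
  have h4 : |a ^ u| ≤ Mu := by
    rw [abs_of_pos (Real.rpow_pos_of_pos (lt_of_lt_of_le hB' ha.1) _)]
    exact aux_rpow_bound hB' hBB u ha
  have habs : |a' ^ u * b' ^ v - a ^ u * b ^ v| ≤ K0 * (|a - a'| + |b - b'|) := by
    have step1 : |a' ^ u * b' ^ v - a ^ u * b ^ v|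
        ≤ |a' ^ u - a ^ u| * |b' ^ v| + |a ^ u| * |b' ^ v - b ^ v| := by
      have e : a' ^ u * b' ^ v - a ^ u * b ^ v
          = (a' ^ u - a ^ u) * b' ^ v + a ^ u * (b' ^ v - b ^ v) := by ring
      calc |a' ^ u * b' ^ v - a ^ u * b ^ v|
          = |(a' ^ u - a ^ u) * b' ^ v + a ^ u * (b' ^ v - b ^ v)| := by rw [e]
        _ ≤ |(a' ^ u - a ^ u) * b' ^ v| + |a ^ u * (b' ^ v - b ^ v)| := abs_add_le _ _
        _ = |a' ^ u - a ^ u| * |b' ^ v| + |a ^ u| * |b' ^ v - b ^ v| := by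
            rw [abs_mul, abs_mul]
    have step2 : |a' ^ u - a ^ u| * |b' ^ v| + |a ^ u| * |b' ^ v - b ^ v|
        ≤ (Lu * |a - a'|) * Mv + Mu * (Lv * |b - b'|) :=
      add_le_add
        (mul_le_mul h1 h3 (abs_nonneg _) (mul_nonneg hLu0 (abs_nonneg _)))
        (mul_le_mul h4 h2 (abs_nonneg _) hMu0)
    have step3 : (Lu * |a - a'|) * Mv + Mu * (Lv * |b - b'|)
        ≤ K0 * (|a - a'| + |b - b'|) := by
      have p1 : 0 ≤ (Mu * Lv) * |a - a'| :=
        mul_nonneg (mul_nonneg hMu0 hLv0) (abs_nonneg _)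
      have p2 : 0 ≤ (Lu * Mv) * |b - b'| :=
        mul_nonneg (mul_nonneg hLu0 hMv0) (abs_nonneg _)
      rw [hK0]
      nlinarith [p1, p2]
    linarith
  have hsq : (a' ^ u * b' ^ v - a ^ u * b ^ v) ^ 2
      ≤ (K0 * (|a - a'| + |b - b'|)) ^ 2 := by
    rw [← sq_abs (a' ^ u * b' ^ v - a ^ u * b ^ v)]
    exact pow_le_pow_left₀ (abs_nonneg _) habs 2
  calc (a' ^ u * b' ^ v - a ^ u * b ^ v) ^ 2
      ≤ (K0 * (|a - a'| + |b - b'|)) ^ 2 := hsq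
    _ = K0 ^ 2 * (|a - a'| + |b - b'|) ^ 2 := by ring
    _ ≤ K0 ^ 2 * (2 * |a - a'| ^ 2 + 2 * |b - b'| ^ 2) :=
        mul_le_mul_of_nonneg_left (by nlinarith [sq_nonneg (|a - a'| - |b - b'|)])
          (sq_nonneg K0)
    _ = 2 * K0 ^ 2 * (|a - a'| ^ 2 + |b - b'| ^ 2) := by ring
    _ = 2 * K0 ^ 2 * ((a - a') ^ 2 + (b - b') ^ 2) := by rw [sq_abs, sq_abs]

end Aux

/-- Regularity of the Tsallis-divergence influence function
`ψ_f(x; f,g) = (α/(α−1))(f(x)^{α−1} g(x)^{1−α} − ∫ f^α g^{1−α})`: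
uniformly over densities bounded in `[B', B]`,
`E_f[(ψ_f(X; f',g') − ψ_f(X; f,g))²] ≤ C (‖f−f'‖₂² + ‖g−g'‖₂²)`. -/
theorem tsallis_influence_regularity
    {X : Type*} [MeasurableSpace X] (μ : Measure X) [IsFiniteMeasure μ]
    (α B B' : ℝ) (hα0 : α ≠ 0) (hα1 : α ≠ 1) (hB' : 0 < B') (hBB : B' ≤ B) :
    ∃ C : ℝ, 0 < C ∧
      ∀ f f' g g' : X → ℝ,
        Measurable f → Measurable f' → Measurable g → Measurable g' →
        (∀ x, B' ≤ f x ∧ f x ≤ B) → (∀ x, B' ≤ f' x ∧ f' x ≤ B) →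
        (∀ x, B' ≤ g x ∧ g x ≤ B) → (∀ x, B' ≤ g' x ∧ g' x ≤ B) →
        (∫ x, f x ∂μ = 1) → (∫ x, f' x ∂μ = 1) →
        (∫ x, g x ∂μ = 1) → (∫ x, g' x ∂μ = 1) →
        ∫ x,
          ((α / (α - 1)) * (f' x ^ (α - 1) * g' x ^ (1 - α)
              - ∫ y, f' y ^ α * g' y ^ (1 - α) ∂μ)
            - (α / (α - 1)) * (f x ^ (α - 1) * g x ^ (1 - α)
              - ∫ y, f y ^ α * g y ^ (1 - α) ∂μ))^2 * f x ∂μ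
        ≤ C * ((∫ x, (f x - f' x)^2 ∂μ) + (∫ x, (g x - g' x)^2 ∂μ)) := by
  have hB : (0:ℝ) < B := lt_of_lt_of_le hB' hBB
  set V := (μ univ).toReal with hVdef
  have hV0 : 0 ≤ V := ENNReal.toReal_nonneg
  set c : ℝ := α / (α - 1) with hc
  obtain ⟨K1, hK10, hK1⟩ := aux_prod_lip hB' hBB (α - 1) (1 - α)
  obtain ⟨K2, hK20, hK2⟩ := aux_prod_lip hB' hBB α (1 - α)
  obtain ⟨Mb, hMb0, hMb⟩ := aux_prod_bdd hB' hBB α (1 - α)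
  have hcoef1 : 0 ≤ 2 * B * c ^ 2 * K1 :=
    mul_nonneg (mul_nonneg (mul_nonneg (by norm_num) hB.le) (sq_nonneg c)) hK10
  have hcoef2 : 0 ≤ 2 * B * c ^ 2 * V ^ 2 * K2 :=
    mul_nonneg (mul_nonneg (mul_nonneg (mul_nonneg (by norm_num) hB.le) (sq_nonneg c))
      (sq_nonneg V)) hK20
  refine ⟨1 + 2 * B * c ^ 2 * K1 + 2 * B * c ^ 2 * V ^ 2 * K2, by linarith, ?_⟩
  intro f f' g g' hmf hmf' hmg hmg' hbf hbf' hbg hbg' hif hif' hig hig'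
  have hfI : ∀ x, f x ∈ Icc B' B := fun x => ⟨(hbf x).1, (hbf x).2⟩
  have hf'I : ∀ x, f' x ∈ Icc B' B := fun x => ⟨(hbf' x).1, (hbf' x).2⟩
  have hgI : ∀ x, g x ∈ Icc B' B := fun x => ⟨(hbg x).1, (hbg x).2⟩
  have hg'I : ∀ x, g' x ∈ Icc B' B := fun x => ⟨(hbg' x).1, (hbg' x).2⟩
  set φ : X → ℝ := fun x => f x ^ (α - 1) * g x ^ (1 - α) with hφ
  set φ' : X → ℝ := fun x => f' x ^ (α - 1) * g' x ^ (1 - α) with hφ'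
  set ρ : X → ℝ := fun x => f x ^ α * g x ^ (1 - α) with hρ
  set ρ' : X → ℝ := fun x => f' x ^ α * g' x ^ (1 - α) with hρ'
  set I : ℝ := ∫ y, ρ y ∂μ with hI
  set I' : ℝ := ∫ y, ρ' y ∂μ with hI'
  set D : ℝ := I' - I with hD
  have hmρ : Measurable ρ := by rw [hρ]; fun_prop
  have hmρ' : Measurable ρ' := by rw [hρ']; fun_prop
  have hiρ : Integrable ρ μ := aux_integrable_of_bdd hmρ
    (fun x => hMb _ _ (hfI x) (hgI x))
  have hiρ' : Integrable ρ' μ := aux_integrable_of_bdd hmρ'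
    (fun x => hMb _ _ (hf'I x) (hg'I x))
  have hiΔρ : Integrable (fun x => ρ' x - ρ x) μ := hiρ'.sub hiρ
  have hiΔρsq : Integrable (fun x => (ρ' x - ρ x) ^ 2) μ := by
    refine aux_integrable_of_bdd (by fun_prop) (M := (2 * Mb) ^ 2) ?_
    intro x
    rw [abs_of_nonneg (sq_nonneg _)]
    have h1 := hMb _ _ (hf'I x) (hg'I x)
    have h2 := hMb _ _ (hfI x) (hgI x)
    have h3 : |ρ' x - ρ x| ≤ 2 * Mb := by
      calc |ρ' x - ρ x| ≤ |ρ' x| + |ρ x| := abs_sub _ _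
        _ ≤ 2 * Mb := by linarith
    calc (ρ' x - ρ x) ^ 2 = |ρ' x - ρ x| ^ 2 := (sq_abs _).symm
      _ ≤ (2 * Mb) ^ 2 := pow_le_pow_left₀ (abs_nonneg _) h3 2
  have hiΔf2 : Integrable (fun x => (f x - f' x) ^ 2) μ := by
    refine aux_integrable_of_bdd (by fun_prop) (M := (B - B') ^ 2) ?_
    intro x
    rw [abs_of_nonneg (sq_nonneg _)]
    exact sq_le_sq' (by linarith [(hbf x).1, (hbf' x).2]) (by linarith [(hbf x).2, (hbf' x).1])
  have hiΔg2 : Integrable (fun x => (g x - g' x) ^ 2) μ := by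
    refine aux_integrable_of_bdd (by fun_prop) (M := (B - B') ^ 2) ?_
    intro x
    rw [abs_of_nonneg (sq_nonneg _)]
    exact sq_le_sq' (by linarith [(hbg x).1, (hbg' x).2]) (by linarith [(hbg x).2, (hbg' x).1])
  set S : ℝ := (∫ x, (f x - f' x) ^ 2 ∂μ) + (∫ x, (g x - g' x) ^ 2 ∂μ) with hS
  have hS0 : 0 ≤ S := add_nonneg (integral_nonneg fun x => sq_nonneg _)
    (integral_nonneg fun x => sq_nonneg _)
  -- bound on ∫ Δρ²
  have hΔρ_pt : ∀ x, (ρ' x - ρ x) ^ 2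
      ≤ K2 * ((f x - f' x) ^ 2 + (g x - g' x) ^ 2) := fun x =>
    hK2 _ _ _ _ (hfI x) (hf'I x) (hgI x) (hg'I x)
  have hΔρ_int : ∫ x, (ρ' x - ρ x) ^ 2 ∂μ ≤ K2 * S := by
    have h1 : ∫ x, (ρ' x - ρ x) ^ 2 ∂μ
        ≤ ∫ x, K2 * ((f x - f' x) ^ 2 + (g x - g' x) ^ 2) ∂μ :=
      integral_mono_of_nonneg (ae_of_all _ fun x => sq_nonneg _)
        ((hiΔf2.add hiΔg2).const_mul _) (ae_of_all _ hΔρ_pt)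
    have h2 : ∫ x, K2 * ((f x - f' x) ^ 2 + (g x - g' x) ^ 2) ∂μ = K2 * S := by
      rw [integral_const_mul, integral_add hiΔf2 hiΔg2]
    linarith
  -- bound on D²
  have hD_int : D = ∫ x, (ρ' x - ρ x) ∂μ := by
    rw [hD, hI, hI', integral_sub hiρ' hiρ]
  have hD2 : D ^ 2 ≤ V * (K2 * S) := by
    have h1 : D ^ 2 ≤ V * ∫ x, (ρ' x - ρ x) ^ 2 ∂μ := by
      rw [hD_int]
      exact aux_sq_integral_le hiΔρ hiΔρsq
    calc D ^ 2 ≤ V * ∫ x, (ρ' x - ρ x) ^ 2 ∂μ := h1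
      _ ≤ V * (K2 * S) := mul_le_mul_of_nonneg_left hΔρ_int hV0
  -- pointwise bound on main integrand
  have hφ_pt : ∀ x, (φ' x - φ x) ^ 2
      ≤ K1 * ((f x - f' x) ^ 2 + (g x - g' x) ^ 2) := fun x =>
    hK1 _ _ _ _ (hfI x) (hf'I x) (hgI x) (hg'I x)
  have hmain_pt : ∀ x,
      (c * (φ' x - I') - c * (φ x - I)) ^ 2 * f x
        ≤ 2 * B * c ^ 2 * K1 * ((f x - f' x) ^ 2 + (g x - g' x) ^ 2)
          + 2 * B * c ^ 2 * D ^ 2 := by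
    intro x
    have hfx := hbf x
    have h1 : (c * (φ' x - I') - c * (φ x - I)) ^ 2 * f x
        = c ^ 2 * (((φ' x - φ x) - D) ^ 2 * f x) := by rw [hD]; ring
    have h2 : ((φ' x - φ x) - D) ^ 2 * f x ≤ (2 * (φ' x - φ x) ^ 2 + 2 * D ^ 2) * B := by
      have h3 : ((φ' x - φ x) - D) ^ 2 ≤ 2 * (φ' x - φ x) ^ 2 + 2 * D ^ 2 := by
        nlinarith [sq_nonneg ((φ' x - φ x) + D)]
      exact mul_le_mul h3 hfx.2 (le_trans hB'.le hfx.1) (by positivity)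
    have h4 : 2 * (φ' x - φ x) ^ 2 + 2 * D ^ 2
        ≤ 2 * K1 * ((f x - f' x) ^ 2 + (g x - g' x) ^ 2) + 2 * D ^ 2 := by
      linarith [hφ_pt x]
    calc (c * (φ' x - I') - c * (φ x - I)) ^ 2 * f x
        = c ^ 2 * (((φ' x - φ x) - D) ^ 2 * f x) := h1
      _ ≤ c ^ 2 * ((2 * (φ' x - φ x) ^ 2 + 2 * D ^ 2) * B) :=
          mul_le_mul_of_nonneg_left h2 (sq_nonneg c)
      _ ≤ c ^ 2 * ((2 * K1 * ((f x - f' x) ^ 2 + (g x - g' x) ^ 2) + 2 * D ^ 2) * B) :=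
          mul_le_mul_of_nonneg_left (mul_le_mul_of_nonneg_right h4 hB.le) (sq_nonneg c)
      _ = 2 * B * c ^ 2 * K1 * ((f x - f' x) ^ 2 + (g x - g' x) ^ 2)
          + 2 * B * c ^ 2 * D ^ 2 := by ring
  -- integrate the pointwise bound
  have hiRHS1 : Integrable
      (fun x => 2 * B * c ^ 2 * K1 * ((f x - f' x) ^ 2 + (g x - g' x) ^ 2)) μ :=
    (hiΔf2.add hiΔg2).const_mul _
  have hRHSeq : ∫ x, (2 * B * c ^ 2 * K1 * ((f x - f' x) ^ 2 + (g x - g' x) ^ 2)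
        + 2 * B * c ^ 2 * D ^ 2) ∂μ
      = 2 * B * c ^ 2 * K1 * S + (2 * B * c ^ 2 * D ^ 2) * V := by
    rw [integral_add hiRHS1 (integrable_const _), integral_const_mul,
      integral_add hiΔf2 hiΔg2, integral_const, smul_eq_mul, mul_comm _ (2 * B * c ^ 2 * D ^ 2)]
    rfl
  have hmain : ∫ x, (c * (φ' x - I') - c * (φ x - I)) ^ 2 * f x ∂μ
      ≤ 2 * B * c ^ 2 * K1 * S + (2 * B * c ^ 2 * D ^ 2) * V := by
    have h1 : ∫ x, (c * (φ' x - I') - c * (φ x - I)) ^ 2 * f x ∂μ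
        ≤ ∫ x, (2 * B * c ^ 2 * K1 * ((f x - f' x) ^ 2 + (g x - g' x) ^ 2)
            + 2 * B * c ^ 2 * D ^ 2) ∂μ :=
      integral_mono_of_nonneg
        (ae_of_all _ fun x => mul_nonneg (sq_nonneg _) (le_trans hB'.le (hbf x).1))
        (hiRHS1.add (integrable_const _)) (ae_of_all _ hmain_pt)
    linarith [hRHSeq ▸ h1]
  -- conclude
  have hD2V : (2 * B * c ^ 2 * D ^ 2) * V ≤ 2 * B * c ^ 2 * V ^ 2 * K2 * S := by
    have ha : 0 ≤ 2 * B * c ^ 2 :=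
      mul_nonneg (mul_nonneg (by norm_num) hB.le) (sq_nonneg c)
    have t1 : 2 * B * c ^ 2 * D ^ 2 ≤ 2 * B * c ^ 2 * (V * (K2 * S)) :=
      mul_le_mul_of_nonneg_left hD2 ha
    have t2 : (2 * B * c ^ 2 * D ^ 2) * V ≤ (2 * B * c ^ 2 * (V * (K2 * S))) * V :=
      mul_le_mul_of_nonneg_right t1 hV0
    calc (2 * B * c ^ 2 * D ^ 2) * V ≤ (2 * B * c ^ 2 * (V * (K2 * S))) * V := t2
      _ = 2 * B * c ^ 2 * V ^ 2 * K2 * S := by ring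
  have hfinal : 2 * B * c ^ 2 * K1 * S + (2 * B * c ^ 2 * D ^ 2) * V
      ≤ (1 + 2 * B * c ^ 2 * K1 + 2 * B * c ^ 2 * V ^ 2 * K2) * S := by
    have : (1 + 2 * B * c ^ 2 * K1 + 2 * B * c ^ 2 * V ^ 2 * K2) * S
        = 2 * B * c ^ 2 * K1 * S + 2 * B * c ^ 2 * V ^ 2 * K2 * S + S := by ring
    linarith [hD2V, hS0]
  exact le_trans hmain hfinal
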